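/- There exists a pseudo-distribution p ∈ Δ_{≤ℓ}([n]) maximizing val(p) satisfying v_1 p_1 = v_2 p_2 = ⋯ = v_{t+1} p_{t+1} ≥ v_{t+2} p_{t+2} ≥ ⋯ ≥ v_n p_n. -/

import Mathlib

open Finset

noncomputable def val (n t : ℕ) (v p : Fin n → ℝ) : ℝ :=
  sInf {x : ℝ | ∃ B : Finset (Fin n), B.card = t ∧ x = ∑ i ∈ univ \ B, v i * p i}

namespace Stmt14Aux

variable {n t : ℕ}

/-- The set of "complement sums" of `y` over complements of sets of size `t`. -/
def S (t : ℕ) (y : Fin n → ℝ) : Set ℝ :=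
  {x : ℝ | ∃ B : Finset (Fin n), B.card = t ∧ x = ∑ i ∈ univ \ B, y i}

lemma val_eq_sInf_S (v p : Fin n → ℝ) :
    val n t v p = sInf (S t (fun i => v i * p i)) := rfl

lemma S_finite (y : Fin n → ℝ) : (S t y).Finite := by
  have hsub : S t y ⊆ (fun B : Finset (Fin n) => ∑ i ∈ univ \ B, y i) '' Set.univ := by
    rintro x ⟨B, hB, rfl⟩; exact ⟨B, trivial, rfl⟩
  exact (Set.finite_univ.image _).subset hsub

/-- If `y` is antitone, the infimum of complement sums is the sum over the last `n - t`
indices. -/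
lemma sInf_S_of_antitone (ht : t < n) (y : Fin n → ℝ)
    (hy : ∀ i j : Fin n, i ≤ j → y j ≤ y i) :
    sInf (S t y) = ∑ i ∈ univ \ Finset.Iio (⟨t, ht⟩ : Fin n), y i := by
  set b : Fin n := ⟨t, ht⟩ with hb
  have hcard : (Finset.Iio b).card = t := by
    rw [Fin.card_Iio]
  have hmem : (∑ i ∈ univ \ Finset.Iio b, y i) ∈ S t y := ⟨_, hcard, rfl⟩
  refine le_antisymm (csInf_le (S_finite y).bddBelow hmem) (le_csInf ⟨_, hmem⟩ ?_)
  rintro x ⟨B, hB, rfl⟩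
  have h1 : ∑ i ∈ B, y i ≤ ∑ i ∈ Finset.Iio b, y i := by
    have hsplit1 : ∑ i ∈ B ∩ Finset.Iio b, y i + ∑ i ∈ B \ Finset.Iio b, y i
        = ∑ i ∈ B, y i := Finset.sum_inter_add_sum_sdiff _ _ _
    have hsplit2 : ∑ i ∈ Finset.Iio b ∩ B, y i + ∑ i ∈ Finset.Iio b \ B, y i
        = ∑ i ∈ Finset.Iio b, y i := Finset.sum_inter_add_sum_sdiff _ _ _
    have hcards : (B \ Finset.Iio b).card = (Finset.Iio b \ B).card :=
      Finset.card_sdiff_comm (by rw [hB, hcard])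
    have h2 : ∑ i ∈ B \ Finset.Iio b, y i ≤ (B \ Finset.Iio b).card • y b := by
      refine Finset.sum_le_card_nsmul _ _ _ ?_
      intro x hx
      have hbx : b ≤ x := by
        have := (Finset.mem_sdiff.1 hx).2
        simpa [Finset.mem_Iio, not_lt] using this
      exact hy _ _ hbx
    have h3 : (Finset.Iio b \ B).card • y b ≤ ∑ i ∈ Finset.Iio b \ B, y i := by
      refine Finset.card_nsmul_le_sum _ _ _ ?_
      intro x hx
      exact hy _ _ (le_of_lt (Finset.mem_Iio.1 (Finset.mem_sdiff.1 hx).1))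
    have h4 : ∑ i ∈ B ∩ Finset.Iio b, y i = ∑ i ∈ Finset.Iio b ∩ B, y i := by
      rw [Finset.inter_comm]
    rw [hcards] at h2
    linarith
  rw [Finset.sum_sdiff_eq_sub (subset_univ B), Finset.sum_sdiff_eq_sub (subset_univ _)]
  linarith

lemma S_comp_perm_subset (y : Fin n → ℝ) (σ : Equiv.Perm (Fin n)) :
    S t (fun i => y (σ i)) ⊆ S t y := by
  classical
  rintro x ⟨B, hB, rfl⟩
  refine ⟨B.image σ, by rw [Finset.card_image_of_injective _ σ.injective, hB], ?_⟩
  have himg : univ \ B.image σ = (univ \ B).image σ := by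
    ext j
    simp only [Finset.mem_sdiff, Finset.mem_image, Finset.mem_univ, true_and]
    constructor
    · intro hj
      refine ⟨σ.symm j, ?_, by simp⟩
      intro hmem
      exact hj ⟨σ.symm j, hmem, by simp⟩
    · rintro ⟨a, haB, rfl⟩ ⟨c, hcB, hca⟩
      exact haB (σ.injective hca ▸ hcB)
  rw [himg, Finset.sum_image (fun a _ c _ h => σ.injective h)]

lemma sInf_S_comp_perm (y : Fin n → ℝ) (σ : Equiv.Perm (Fin n)) :
    sInf (S t (fun i => y (σ i))) = sInf (S t y) := by
  have h1 := S_comp_perm_subset (t := t) y σ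
  have h2 := S_comp_perm_subset (t := t) (fun i => y (σ i)) σ.symm
  simp only [Equiv.apply_symm_apply] at h2
  exact congrArg sInf (Set.Subset.antisymm h1 h2)

lemma val_eq_inf' (v q : Fin n → ℝ)
    (hne : (univ.filter fun B : Finset (Fin n) => B.card = t).Nonempty) :
    val n t v q = (univ.filter fun B : Finset (Fin n) => B.card = t).inf' hne
      (fun B => ∑ i ∈ univ \ B, v i * q i) := by
  rw [val_eq_sInf_S, Finset.inf'_eq_csInf_image]
  congr 1
  ext x
  simp only [S, Set.mem_setOf_eq, Set.mem_image, Finset.mem_coe, Finset.mem_filter,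
    Finset.mem_univ, true_and]
  constructor
  · rintro ⟨B, hB, rfl⟩; exact ⟨B, hB, rfl⟩
  · rintro ⟨B, hB, rfl⟩; exact ⟨B, hB, rfl⟩

end Stmt14Aux

open Stmt14Aux in
/-- There exists a pseudo-distribution `p ∈ Δ_{≤ℓ}([n])` maximizing `val p`
with `v 1 p 1 = ⋯ = v (t+1) p (t+1) ≥ v (t+2) p (t+2) ≥ ⋯ ≥ v n p n`. -/
theorem stmt_14 (n t ℓ : ℕ) (v : Fin n → ℝ)
    (hmono : ∀ i j : Fin n, i ≤ j → v j ≤ v i) (hpos : ∀ i, 0 < v i)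
    (ht1 : 1 ≤ t) (ht : t < n) (hℓ1 : 1 ≤ ℓ) (hℓ : ℓ < n) :
    ∃ p : Fin n → ℝ, (∀ i, 0 ≤ p i ∧ p i ≤ 1) ∧ (∑ i, p i) ≤ ℓ ∧
      (∀ q : Fin n → ℝ, (∀ i, 0 ≤ q i ∧ q i ≤ 1) → (∑ i, q i) ≤ ℓ →
        val n t v q ≤ val n t v p) ∧
      (∀ k l : Fin n, (k : ℕ) ≤ t → (l : ℕ) ≤ t → v k * p k = v l * p l) ∧
      (∀ i j : Fin n, i ≤ j → v j * p j ≤ v i * p i) := by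
  classical
  set b : Fin n := ⟨t, ht⟩ with hbdef
  have hBne : (univ.filter fun B : Finset (Fin n) => B.card = t).Nonempty :=
    ⟨Finset.Iio b, by simp [Finset.mem_filter, Fin.card_Iio, hbdef]⟩
  set F : (Fin n → ℝ) → ℝ := fun q =>
    (univ.filter fun B : Finset (Fin n) => B.card = t).inf' hBne
      (fun B => ∑ i ∈ univ \ B, v i * q i) with hFdef
  have hvalF : ∀ q : Fin n → ℝ, val n t v q = F q := fun q => val_eq_inf' v q hBne
  -- the feasible set
  set K : Set (Fin n → ℝ) := {q | (∀ i, 0 ≤ q i ∧ q i ≤ 1) ∧ (∑ i, q i) ≤ ℓ} with hKdef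
  have hKeq : K = Set.Icc (0 : Fin n → ℝ) 1 ∩ {q : Fin n → ℝ | (∑ i, q i) ≤ ℓ} := by
    ext q
    simp only [hKdef, Set.mem_setOf_eq, Set.mem_inter_iff, Set.mem_Icc, Pi.le_def,
      Pi.zero_apply, Pi.one_apply]
    constructor
    · rintro ⟨h1, h2⟩
      exact ⟨⟨fun i => (h1 i).1, fun i => (h1 i).2⟩, h2⟩
    · rintro ⟨⟨h1, h2⟩, h3⟩
      exact ⟨fun i => ⟨h1 i, h2 i⟩, h3⟩
  have hKc : IsCompact K := by
    rw [hKeq]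
    exact isCompact_Icc.inter_right
      (isClosed_le (continuous_finset_sum _ fun i _ => continuous_apply i) continuous_const)
  have hKne : K.Nonempty := by
    refine ⟨0, fun i => by simp, ?_⟩
    simp only [Pi.zero_apply, Finset.sum_const_zero]
    positivity
  have hFcont : Continuous F := by
    refine Continuous.finset_inf'_apply hBne ?_
    intro B _
    exact continuous_finset_sum _ fun i _ => continuous_const.mul (continuous_apply i)
  obtain ⟨q, hqK, hqmax⟩ := hKc.exists_isMaxOn hKne hFcont.continuousOn
  obtain ⟨hqbnd, hqsum⟩ := hqK
  -- sort y = v * q decreasingly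
  set y : Fin n → ℝ := fun i => v i * q i with hydef
  set σ : Equiv.Perm (Fin n) := Tuple.sort (fun i => -(y i)) with hσdef
  set w : Fin n → ℝ := fun i => y (σ i) with hwdef
  have hwanti : ∀ i j : Fin n, i ≤ j → w j ≤ w i := by
    intro i j hij
    have := Tuple.monotone_sort (fun i => -(y i)) hij
    simp only [Function.comp_apply] at this
    simpa [hwdef] using this
  have hy0 : ∀ i, 0 ≤ y i := fun i => mul_nonneg (hpos i).le (hqbnd i).1
  have hyv : ∀ i, y i ≤ v i := fun i => by
    calc y i = v i * q i := rfl
    _ ≤ v i * 1 := by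
        have := (hqbnd i).2
        nlinarith [hpos i]
    _ = v i := mul_one _
  have hw0 : ∀ i, 0 ≤ w i := fun i => hy0 _
  -- pigeonhole: the i-th largest value is at most v i
  have hwv : ∀ i, w i ≤ v i := by
    intro i
    by_contra hcon
    push_neg at hcon
    have hsub : (Finset.Iic i).image σ ⊆ Finset.Iio i := by
      intro j hj
      obtain ⟨k, hk, rfl⟩ := Finset.mem_image.1 hj
      have hk' : k ≤ i := Finset.mem_Iic.1 hk
      have h1 : v i < w k := lt_of_lt_of_le hcon (hwanti k i hk')
      have h2 : w k ≤ v (σ k) := hyv (σ k)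
      have h3 : v i < v (σ k) := lt_of_lt_of_le h1 h2
      rw [Finset.mem_Iio]
      by_contra hlt
      push_neg at hlt
      exact absurd (hmono i (σ k) hlt) (not_le.2 h3)
    have hc := Finset.card_le_card hsub
    rw [Finset.card_image_of_injective _ σ.injective, Fin.card_Iic, Fin.card_Iio] at hc
    omega
  -- budget for the sorted profile (rearrangement inequality)
  have hbudget : ∑ i, w i * (v i)⁻¹ ≤ ∑ i, q i := by
    have hanti : Antivary w (fun i => (v i)⁻¹) := by
      intro i j hij
      have hij' : i ≤ j := by
        by_contra hji
        push_neg at hji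
        have h1 : v i ≤ v j := hmono j i hji.le
        have h2 : (v j)⁻¹ ≤ (v i)⁻¹ := inv_anti₀ (hpos i) h1
        exact absurd hij (not_lt.2 h2)
      exact hwanti i j hij'
    have hre := hanti.sum_smul_le_sum_comp_perm_smul (σ := σ.symm)
    simp only [smul_eq_mul] at hre
    have he : ∀ i, w (σ.symm i) = y i := fun i => by
      simp [hwdef]
    have heq : ∑ i, w (σ.symm i) * (v i)⁻¹ = ∑ i, q i := by
      refine Finset.sum_congr rfl fun i _ => ?_
      rw [he i]
      simp only [hydef]
      rw [mul_comm (v i) (q i), mul_assoc, mul_inv_cancel₀ (hpos i).ne', mul_one]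
    calc ∑ i, w i * (v i)⁻¹ ≤ ∑ i, w (σ.symm i) * (v i)⁻¹ := hre
    _ = ∑ i, q i := heq
  -- the flattened profile
  set m : ℝ := w b with hmdef
  set p : Fin n → ℝ := fun i => min (w i) m / v i with hpdef
  have hvp : ∀ i, v i * p i = min (w i) m := by
    intro i
    simp only [hpdef]
    rw [← mul_div_assoc]
    exact mul_div_cancel_left₀ _ (hpos i).ne'
  have hpanti : ∀ i j : Fin n, i ≤ j → v j * p j ≤ v i * p i := by
    intro i j hij
    rw [hvp, hvp]
    exact min_le_min (hwanti i j hij) le_rfl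
  refine ⟨p, ?_, ?_, ?_, ?_, hpanti⟩
  · intro i
    constructor
    · exact div_nonneg (le_min (hw0 i) (hw0 b)) (hpos i).le
    · rw [div_le_one (hpos i)]
      exact le_trans (min_le_left _ _) (hwv i)
  · calc ∑ i, p i ≤ ∑ i, w i * (v i)⁻¹ := by
          refine Finset.sum_le_sum fun i _ => ?_
          simp only [hpdef]
          rw [div_eq_mul_inv]
          exact mul_le_mul_of_nonneg_right (min_le_left _ _) (inv_nonneg.2 (hpos i).le)
    _ ≤ ∑ i, q i := hbudget
    _ ≤ ℓ := hqsum
  · -- optimality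
    intro q' hq'bnd hq'sum
    have h1 : val n t v q' ≤ val n t v q := by
      rw [hvalF, hvalF]
      exact hqmax ⟨hq'bnd, hq'sum⟩
    have hvq : val n t v q = ∑ i ∈ univ \ Finset.Iio b, w i := by
      rw [val_eq_sInf_S]
      have : sInf (S t y) = sInf (S t w) := (sInf_S_comp_perm y σ).symm
      calc sInf (S t (fun i => v i * q i)) = sInf (S t w) := this
      _ = ∑ i ∈ univ \ Finset.Iio b, w i := sInf_S_of_antitone ht w hwanti
    have hvp' : val n t v p = ∑ i ∈ univ \ Finset.Iio b, w i := by
      rw [val_eq_sInf_S]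
      have hanti' : ∀ i j : Fin n, i ≤ j → v j * p j ≤ v i * p i := hpanti
      rw [sInf_S_of_antitone ht _ hanti']
      refine Finset.sum_congr rfl fun i hi => ?_
      have hbi : b ≤ i := by
        have := (Finset.mem_sdiff.1 hi).2
        simpa [Finset.mem_Iio, not_lt] using this
      rw [hvp i, min_eq_left (hwanti b i hbi)]
    rw [hvp']
    rw [hvq] at h1
    exact h1
  · -- equal on the first t+1 coordinates
    intro k l hk hl
    have hkb : k ≤ b := by
      rw [Fin.le_def]
      exact hk
    have hlb : l ≤ b := by
      rw [Fin.le_def]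
      exact hl
    rw [hvp, hvp, min_eq_right (hwanti k b hkb), min_eq_right (hwanti l b hlb)]
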